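/- arXiv:2306.17687 — 3 statements merged into one kernel-verified Lean document; each statement's English description precedes it below -/
import Mathlib

section
/- (Intertwining of Op with the Schrödinger representation of the crossed product.) Let g : ℝⁿ → C_b(ℝⁿ) be Bochner integrable, f its symbol, and T an Op-operator for g. Then for every Schwartz function u and almost every ξ ∈ ℝⁿ, (𝓕(Tu))(ξ) = ∫_{ℝⁿ} g(ξ−η)(η) (𝓕u)(η) dη; that is, conjugation by the Fourier transform carries T into the integral operator with kernel (ξ,η) ↦ g(ξ−η)(η). -/
open MeasureTheory Filter Complex

noncomputable section

/-- `ℝⁿ` as a Euclidean (inner product) space. -/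
abbrev En (n : ℕ) := EuclideanSpace ℝ (Fin n)

/-- Bounded uniformly continuous complex functions. -/
def BCu {n : ℕ} (ψ : En n → ℂ) : Prop :=
  Bornology.IsBounded (Set.range ψ) ∧ UniformContinuous ψ

/-- Continuous functions vanishing at infinity. -/
def C0 {n : ℕ} (φ : En n → ℂ) : Prop :=
  Continuous φ ∧ Tendsto φ (cocompact (En n)) (nhds 0)

/-- Vanishing oscillation functions: bounded uniformly continuous functions all of whose
translation differences vanish at infinity. -/
def VO {n : ℕ} (ψ : En n → ℂ) : Prop :=
  BCu ψ ∧ ∀ ζ : En n, C0 (fun ξ => ψ (ξ + ζ) - ψ ξ)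

/-- The symbol `f(x,ξ) = ∫ e^{2πi x·η} g(η)(ξ) dη` of a Bochner-integrable
`g : ℝⁿ → C_b(ℝⁿ)`. -/
def symbol {n : ℕ} (g : En n → BoundedContinuousFunction (En n) ℂ) (x ξ : En n) : ℂ :=
  ∫ η : En n, Complex.exp (2 * Real.pi * Complex.I * ((inner ℝ x η : ℝ) : ℂ)) * g η ξ

/-- `T` is an Op-operator for `g` : for every Schwartz function `u` (viewed as an element of
`L²(ℝⁿ)`) and almost every `x`, `(Tu)(x) = ∫ e^{2πi x·ξ} f(x,ξ) (𝓕u)(ξ) dξ`, where `f` is the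
symbol of `g` and `𝓕` is the Fourier transform. -/
def IsOpOperator {n : ℕ} (g : En n → BoundedContinuousFunction (En n) ℂ)
    (T : Lp ℂ 2 (volume : Measure (En n)) →L[ℂ] Lp ℂ 2 (volume : Measure (En n))) : Prop :=
  ∀ u : SchwartzMap (En n) ℂ, ∀ v : Lp ℂ 2 (volume : Measure (En n)),
    (⇑v =ᵐ[volume] ⇑u) →
    ∀ᵐ x : En n,
      (T v : En n → ℂ) x =
        ∫ ξ : En n, Complex.exp (2 * Real.pi * Complex.I * ((inner ℝ x ξ : ℝ) : ℂ)) *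
          symbol g x ξ * VectorFourier.fourierIntegral Real.fourierChar volume (innerₗ (En n)) (⇑u) ξ

/-- A character of the subalgebra `{ψ | ψ ∈ A}` of functions that vanishes on `I`.
(Only the values of `σ` on `A` are constrained.) -/
def IsCharacter {n : ℕ} (A I : Set (En n → ℂ)) (σ : (En n → ℂ) → ℂ) : Prop :=
  (∀ ψ φ, ψ ∈ A → φ ∈ A → σ (ψ + φ) = σ ψ + σ φ) ∧
  (∀ (c : ℂ) ψ, ψ ∈ A → σ (c • ψ) = c * σ ψ) ∧
  (∀ ψ φ, ψ ∈ A → φ ∈ A → σ (ψ * φ) = σ ψ * σ φ) ∧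
  σ 1 = 1 ∧
  (∀ j, j ∈ I → σ j = 0)

/-- A character of `VO(ℝⁿ)` supported at infinity. -/
def IsVOCharacterAtInfinity {n : ℕ} (σ : (En n → ℂ) → ℂ) : Prop :=
  IsCharacter {ψ | VO ψ} {φ | C0 φ} σ

/-! ### Auxiliary material for the proof -/

open scoped FourierTransform RealInnerProductSpace ComplexConjugate SchwartzMap

namespace OpProofAux

variable {n : ℕ}

/-- The plane-wave character `e^{2πi⟨x,ξ⟩}`. -/
def ch (x ξ : En n) : ℂ := Complex.exp (2 * Real.pi * Complex.I * ((inner ℝ x ξ : ℝ) : ℂ))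

lemma ch_mul (x ξ η : En n) : ch x ξ * ch x η = ch x (ξ + η) := by
  rw [ch, ch, ch, ← Complex.exp_add]
  congr 1
  rw [inner_add_right]
  push_cast
  ring

lemma norm_ch (x ξ : En n) : ‖ch x ξ‖ = 1 := by
  rw [ch, Complex.norm_exp]
  norm_num [Complex.mul_re, Complex.mul_im]

lemma conj_ch (x ξ : En n) :
    (starRingEnd ℂ) (ch x ξ) =
      Complex.exp (((-2 * Real.pi * (inner ℝ x ξ : ℝ) : ℝ) : ℂ) * Complex.I) := by
  rw [ch, ← Complex.exp_conj]
  congr 1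
  simp only [map_mul, Complex.conj_I, Complex.conj_ofReal, map_ofNat]
  push_cast
  ring

lemma continuous_ch : Continuous fun p : En n × En n => ch p.1 p.2 :=
  Complex.continuous_exp.comp <| continuous_const.mul <|
    Complex.continuous_ofReal.comp continuous_inner

lemma fourier_eq (w : 𝓢(En n, ℂ)) (ξ : En n) :
    VectorFourier.fourierIntegral Real.fourierChar volume (innerₗ (En n)) ⇑w ξ = ∫ x, (starRingEnd ℂ) (ch x ξ) * w x := by
  refine (Real.fourier_eq' (⇑w) ξ).trans ?_
  refine integral_congr_ae (Eventually.of_forall fun x => ?_)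
  simp only [smul_eq_mul, conj_ch]

variable {g : En n → BoundedContinuousFunction (En n) ℂ}

lemma aesm_sub (hg : Integrable g (volume : Measure (En n))) :
    AEStronglyMeasurable (fun p : En n × En n => g (p.1 - p.2))
      ((volume : Measure (En n)).prod volume) :=
  hg.aestronglyMeasurable.comp_quasiMeasurePreserving
    (quasiMeasurePreserving_sub_of_right_invariant _ _)

lemma aesm_sub' (hg : Integrable g (volume : Measure (En n))) :
    AEStronglyMeasurable (fun p : En n × En n => g (p.2 - p.1))
      ((volume : Measure (En n)).prod volume) := by
  have h := (aesm_sub hg).comp_quasiMeasurePreserving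
    (Measure.measurePreserving_swap (μ := (volume : Measure (En n)))
      (ν := volume)).quasiMeasurePreserving
  simpa [Function.comp_def] using h

lemma aesm_eval (hg : Integrable g (volume : Measure (En n))) :
    AEStronglyMeasurable (fun p : En n × En n => g (p.1 - p.2) p.2)
      ((volume : Measure (En n)).prod volume) := by
  have h1 : AEStronglyMeasurable
      (fun p : En n × En n => ((g (p.1 - p.2), p.2) : BoundedContinuousFunction (En n) ℂ × En n))
      ((volume : Measure (En n)).prod volume) :=
    (aesm_sub hg).prodMk measurable_snd.aestronglyMeasurable
  exact continuous_eval.comp_aestronglyMeasurable h1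

lemma aesm_eval' (hg : Integrable g (volume : Measure (En n))) :
    AEStronglyMeasurable (fun p : En n × En n => g (p.2 - p.1) p.1)
      ((volume : Measure (En n)).prod volume) := by
  have h1 : AEStronglyMeasurable
      (fun p : En n × En n => ((g (p.2 - p.1), p.1) : BoundedContinuousFunction (En n) ℂ × En n))
      ((volume : Measure (En n)).prod volume) :=
    (aesm_sub' hg).prodMk measurable_fst.aestronglyMeasurable
  exact continuous_eval.comp_aestronglyMeasurable h1

lemma master1 (hg : Integrable g (volume : Measure (En n))) (w : 𝓢(En n, ℂ)) :
    Integrable (fun p : En n × En n => ‖g (p.1 - p.2)‖ * ‖w p.2‖)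
      ((volume : Measure (En n)).prod volume) := by
  have hm : AEStronglyMeasurable (fun p : En n × En n => ‖g (p.1 - p.2)‖ * ‖w p.2‖)
      ((volume : Measure (En n)).prod volume) :=
    (aesm_sub hg).norm.mul (w.continuous.norm.comp continuous_snd).aestronglyMeasurable
  refine (integrable_prod_iff' hm).2 ⟨Eventually.of_forall fun η => ?_, ?_⟩
  · simpa using (hg.norm.comp_sub_right η).mul_const ‖w η‖
  · refine Integrable.congr (w.integrable.norm.const_mul (∫ a, ‖g a‖))
      (Eventually.of_forall fun η => ?_)
    simp only [norm_mul, norm_norm]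
    rw [MeasureTheory.integral_mul_const,
      MeasureTheory.integral_sub_right_eq_self (fun ξ => ‖g ξ‖) η]

lemma master2 (hg : Integrable g (volume : Measure (En n))) (w : 𝓢(En n, ℂ)) :
    Integrable (fun p : En n × En n => ‖g (p.2 - p.1)‖ * ‖w p.1‖)
      ((volume : Measure (En n)).prod volume) := by
  have hm : AEStronglyMeasurable (fun p : En n × En n => ‖g (p.2 - p.1)‖ * ‖w p.1‖)
      ((volume : Measure (En n)).prod volume) :=
    (aesm_sub' hg).norm.mul (w.continuous.norm.comp continuous_fst).aestronglyMeasurable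
  refine (integrable_prod_iff hm).2 ⟨Eventually.of_forall fun ξ => ?_, ?_⟩
  · simpa using (hg.norm.comp_sub_right ξ).mul_const ‖w ξ‖
  · refine Integrable.congr (w.integrable.norm.const_mul (∫ a, ‖g a‖))
      (Eventually.of_forall fun ξ => ?_)
    simp only [norm_mul, norm_norm]
    rw [MeasureTheory.integral_mul_const,
      MeasureTheory.integral_sub_right_eq_self (fun ζ => ‖g ζ‖) ξ]

lemma int_eval (hg : Integrable g (volume : Measure (En n))) (w : 𝓢(En n, ℂ)) :
    Integrable (fun p : En n × En n => g (p.1 - p.2) p.2 * w p.2)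
      ((volume : Measure (En n)).prod volume) := by
  refine (master1 hg w).mono'
    ((aesm_eval hg).mul (w.continuous.comp continuous_snd).aestronglyMeasurable)
    (Eventually.of_forall fun p => ?_)
  rw [norm_mul]
  exact mul_le_mul_of_nonneg_right (BoundedContinuousFunction.norm_coe_le_norm _ _)
    (norm_nonneg _)

lemma int_eval2 (hg : Integrable g (volume : Measure (En n))) (w : 𝓢(En n, ℂ)) (x : En n) :
    Integrable (fun p : En n × En n => ch x p.2 * (g (p.2 - p.1) p.1 * w p.1))
      ((volume : Measure (En n)).prod volume) := by
  have hm : AEStronglyMeasurable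
      (fun p : En n × En n => ch x p.2 * (g (p.2 - p.1) p.1 * w p.1))
      ((volume : Measure (En n)).prod volume) :=
    ((continuous_ch.comp (continuous_const.prodMk continuous_snd)).aestronglyMeasurable).mul
      ((aesm_eval' hg).mul (w.continuous.comp continuous_fst).aestronglyMeasurable)
  refine (master2 hg w).mono' hm (Eventually.of_forall fun p => ?_)
  rw [norm_mul, norm_mul, norm_ch, one_mul]
  exact mul_le_mul_of_nonneg_right (BoundedContinuousFunction.norm_coe_le_norm _ _)
    (norm_nonneg _)

lemma int_slice (hg : Integrable g (volume : Measure (En n))) (w : 𝓢(En n, ℂ)) (ξ : En n) :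
    Integrable (fun η => g (ξ - η) η * w η) (volume : Measure (En n)) := by
  have hsub : AEStronglyMeasurable (fun η : En n => g (ξ - η)) volume := by
    exact hg.aestronglyMeasurable.comp_quasiMeasurePreserving
      (quasiMeasurePreserving_sub_left (volume : Measure (En n)) ξ)
  have hm : AEStronglyMeasurable (fun η => g (ξ - η) η * w η) (volume : Measure (En n)) := by
    have h1 : AEStronglyMeasurable
        (fun η : En n => ((g (ξ - η), η) : BoundedContinuousFunction (En n) ℂ × En n)) volume :=
      hsub.prodMk aestronglyMeasurable_id
    exact (continuous_eval.comp_aestronglyMeasurable h1).mul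
      w.continuous.aestronglyMeasurable
  have hmaj : Integrable (fun η : En n => ‖g (ξ - η)‖ * (SchwartzMap.seminorm ℝ 0 0 w)) volume :=
    ((integrable_comp_sub_left (fun a => ‖g a‖) ξ).2 hg.norm).mul_const _
  refine hmaj.mono' hm (Eventually.of_forall fun η => ?_)
  rw [norm_mul]
  exact mul_le_mul (BoundedContinuousFunction.norm_coe_le_norm _ _)
    (SchwartzMap.norm_le_seminorm ℝ w η) (norm_nonneg _) (norm_nonneg _)

lemma K_bound (hg : Integrable g (volume : Measure (En n))) (w : 𝓢(En n, ℂ)) (ξ : En n) :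
    ‖∫ η, g (ξ - η) η * w η‖ ≤ (∫ a, ‖g a‖) * (SchwartzMap.seminorm ℝ 0 0 w) := by
  have hmaj : Integrable (fun η : En n => ‖g (ξ - η)‖ * (SchwartzMap.seminorm ℝ 0 0 w)) volume :=
    ((integrable_comp_sub_left (fun a => ‖g a‖) ξ).2 hg.norm).mul_const _
  calc ‖∫ η, g (ξ - η) η * w η‖ ≤ ∫ η, ‖g (ξ - η) η * w η‖ := norm_integral_le_integral_norm _
    _ ≤ ∫ η, ‖g (ξ - η)‖ * (SchwartzMap.seminorm ℝ 0 0 w) := by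
        refine integral_mono (int_slice hg w ξ).norm hmaj fun η => ?_
        rw [norm_mul]
        exact mul_le_mul (BoundedContinuousFunction.norm_coe_le_norm _ _)
          (SchwartzMap.norm_le_seminorm ℝ w η) (norm_nonneg _) (norm_nonneg _)
    _ = (∫ a, ‖g a‖) * (SchwartzMap.seminorm ℝ 0 0 w) := by
        rw [MeasureTheory.integral_mul_const,
          MeasureTheory.integral_sub_left_eq_self (fun a => ‖g a‖) volume ξ]

lemma key (hg : Integrable g (volume : Measure (En n))) (w : 𝓢(En n, ℂ)) (x : En n) :
    (∫ ξ, ch x ξ * symbol g x ξ * w ξ) = ∫ ζ, ch x ζ * ∫ ξ, g (ζ - ξ) ξ * w ξ := by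
  have step1 : ∀ ξ : En n,
      ch x ξ * symbol g x ξ * w ξ = ∫ ζ, ch x ζ * (g (ζ - ξ) ξ * w ξ) := by
    intro ξ
    have e1 : ch x ξ * symbol g x ξ * w ξ = ∫ η, ch x ξ * (ch x η * g η ξ) * w ξ := by
      rw [MeasureTheory.integral_mul_const, MeasureTheory.integral_const_mul]
      rfl
    have e2 : ∀ η, ch x ξ * (ch x η * g η ξ) * w ξ = ch x (ξ + η) * (g η ξ * w ξ) := by
      intro η
      rw [← ch_mul]
      ring
    have e3 : (∫ η, ch x (ξ + η) * (g η ξ * w ξ)) = ∫ ζ, ch x ζ * (g (ζ - ξ) ξ * w ξ) := by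
      have h4 := MeasureTheory.integral_add_right_eq_self (μ := (volume : Measure (En n)))
        (fun ζ => ch x ζ * (g (ζ - ξ) ξ * w ξ)) ξ
      rw [← h4]
      refine integral_congr_ae (Eventually.of_forall fun η => ?_)
      beta_reduce
      rw [add_sub_cancel_right, add_comm ξ η]
    calc ch x ξ * symbol g x ξ * w ξ
        = ∫ η, ch x ξ * (ch x η * g η ξ) * w ξ := e1
      _ = ∫ η, ch x (ξ + η) * (g η ξ * w ξ) := integral_congr_ae (Eventually.of_forall e2)
      _ = ∫ ζ, ch x ζ * (g (ζ - ξ) ξ * w ξ) := e3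
  calc (∫ ξ, ch x ξ * symbol g x ξ * w ξ)
      = ∫ ξ, ∫ ζ, ch x ζ * (g (ζ - ξ) ξ * w ξ) := integral_congr_ae (Eventually.of_forall step1)
    _ = ∫ ζ, ∫ ξ, ch x ζ * (g (ζ - ξ) ξ * w ξ) := integral_integral_swap (int_eval2 hg w x)
    _ = ∫ ζ, ch x ζ * ∫ ξ, g (ζ - ξ) ξ * w ξ := by
        refine integral_congr_ae (Eventually.of_forall fun ζ => ?_)
        beta_reduce
        rw [MeasureTheory.integral_const_mul]

lemma pairing (K : En n → ℂ) (Kint : Integrable K (volume : Measure (En n)))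
    (w : 𝓢(En n, ℂ)) :
    (∫ ξ, (starRingEnd ℂ) (K ξ) * VectorFourier.fourierIntegral Real.fourierChar volume (innerₗ (En n)) ⇑w ξ) =
      ∫ x, (starRingEnd ℂ) (∫ ζ, ch x ζ * K ζ) * w x := by
  have hconjK : AEStronglyMeasurable (fun ξ => (starRingEnd ℂ) (K ξ))
      (volume : Measure (En n)) :=
    Complex.continuous_conj.comp_aestronglyMeasurable Kint.aestronglyMeasurable
  have hQ : Integrable
      (fun p : En n × En n => (starRingEnd ℂ) (K p.1) * ((starRingEnd ℂ) (ch p.2 p.1) * w p.2))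
      ((volume : Measure (En n)).prod volume) := by
    have hcont : Continuous fun p : En n × En n => (starRingEnd ℂ) (ch p.2 p.1) * w p.2 :=
      ((Complex.continuous_conj).comp
        (continuous_ch.comp (continuous_snd.prodMk continuous_fst))).mul
        (w.continuous.comp continuous_snd)
    refine (Kint.norm.mul_prod w.integrable.norm).mono'
      (hconjK.comp_fst.mul hcont.aestronglyMeasurable) (Eventually.of_forall fun p => ?_)
    rw [norm_mul, norm_mul, RCLike.norm_conj, RCLike.norm_conj, norm_ch, one_mul]
  calc (∫ ξ, (starRingEnd ℂ) (K ξ) * VectorFourier.fourierIntegral Real.fourierChar volume (innerₗ (En n)) ⇑w ξ)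
      = ∫ ξ, ∫ x, (starRingEnd ℂ) (K ξ) * ((starRingEnd ℂ) (ch x ξ) * w x) := by
        refine integral_congr_ae (Eventually.of_forall fun ξ => ?_)
        beta_reduce
        rw [fourier_eq, MeasureTheory.integral_const_mul]
    _ = ∫ x, ∫ ξ, (starRingEnd ℂ) (K ξ) * ((starRingEnd ℂ) (ch x ξ) * w x) :=
        integral_integral_swap hQ
    _ = ∫ x, (starRingEnd ℂ) (∫ ζ, ch x ζ * K ζ) * w x := by
        refine integral_congr_ae (Eventually.of_forall fun x => ?_)
        calc (∫ ξ, (starRingEnd ℂ) (K ξ) * ((starRingEnd ℂ) (ch x ξ) * w x))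
            = ∫ ξ, (starRingEnd ℂ) (ch x ξ * K ξ) * w x := by
              refine integral_congr_ae (Eventually.of_forall fun ξ => ?_)
              beta_reduce
              rw [map_mul]
              ring
          _ = (∫ ξ, (starRingEnd ℂ) (ch x ξ * K ξ)) * w x := MeasureTheory.integral_mul_const _ _
          _ = (starRingEnd ℂ) (∫ ζ, ch x ζ * K ζ) * w x := by rw [integral_conj]

lemma K_mem (K : En n → ℂ) (Kint : Integrable K (volume : Measure (En n))) (C : ℝ)
    (hC : ∀ ξ, ‖K ξ‖ ≤ C) : MemLp K 2 (volume : Measure (En n)) := by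
  rw [memLp_two_iff_integrable_sq_norm Kint.aestronglyMeasurable]
  have haesm : AEStronglyMeasurable (fun ξ => ‖K ξ‖ ^ 2) (volume : Measure (En n)) := by
    exact Kint.aestronglyMeasurable.norm.pow 2
  refine (Kint.norm.const_mul C).mono' haesm (Eventually.of_forall fun ξ => ?_)
  rw [Real.norm_of_nonneg (by positivity), sq]
  exact mul_le_mul_of_nonneg_right (hC ξ) (norm_nonneg _)

/-- A smooth compactly supported function as a Schwartz map. -/
def toSchwartz (f : En n → ℂ) (h1 : ContDiff ℝ ((⊤ : ℕ∞) : WithTop ℕ∞) f) (h2 : HasCompactSupport f) :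
    𝓢(En n, ℂ) where
  toFun := f
  smooth' := h1
  decay' := by
    intro k m
    have hcont : Continuous fun x : En n => ‖x‖ ^ k * ‖iteratedFDeriv ℝ m f x‖ :=
      (continuous_norm.pow k).mul (h1.continuous_iteratedFDeriv (mod_cast le_top)).norm
    have hsupp : HasCompactSupport fun x : En n => ‖x‖ ^ k * ‖iteratedFDeriv ℝ m f x‖ :=
      HasCompactSupport.mul_left ((h2.iteratedFDeriv m).norm)
    obtain ⟨C, hC⟩ := hcont.bounded_above_of_compact_support hsupp
    exact ⟨C, fun x => (Real.le_norm_self _).trans (hC x)⟩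

@[simp] lemma toSchwartz_apply (f : En n → ℂ) (h1 : ContDiff ℝ ((⊤ : ℕ∞) : WithTop ℕ∞) f) (h2 : HasCompactSupport f)
    (x : En n) : toSchwartz f h1 h2 x = f x := rfl

lemma schwartz_memL2 (w : 𝓢(En n, ℂ)) : MemLp ⇑w 2 (volume : Measure (En n)) :=
  K_mem ⇑w w.integrable (SchwartzMap.seminorm ℝ 0 0 w) (SchwartzMap.norm_le_seminorm ℝ w)

end OpProofAux

open OpProofAux

set_option maxHeartbeats 2000000 in
theorem op_operator_fourier_conjugation
    (n : ℕ) (hn : 1 ≤ n)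
    (g : En n → BoundedContinuousFunction (En n) ℂ)
    (hg : Integrable g (volume : Measure (En n)))
    (T : Lp ℂ 2 (volume : Measure (En n)) →L[ℂ] Lp ℂ 2 (volume : Measure (En n)))
    (hT : IsOpOperator g T)
    -- `U` is the Fourier transform, extended unitarily to `L²(ℝⁿ)`
    (U : Lp ℂ 2 (volume : Measure (En n)) ≃ₗᵢ[ℂ] Lp ℂ 2 (volume : Measure (En n)))
    (hU : ∀ u : SchwartzMap (En n) ℂ, ∀ v : Lp ℂ 2 (volume : Measure (En n)),
      (⇑v =ᵐ[volume] ⇑u) → (⇑(U v) =ᵐ[volume] VectorFourier.fourierIntegral Real.fourierChar volume (innerₗ (En n)) (⇑u))) :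
    ∀ u : SchwartzMap (En n) ℂ, ∀ v : Lp ℂ 2 (volume : Measure (En n)),
      (⇑v =ᵐ[volume] ⇑u) →
      ∀ᵐ ξ : En n,
        (U (T v) : En n → ℂ) ξ =
          ∫ η : En n, g (ξ - η) η * VectorFourier.fourierIntegral Real.fourierChar volume (innerₗ (En n)) (⇑u) η := by
  intro u v hv
  -- the Fourier transform of `u`, as a Schwartz function
  set W : SchwartzMap (En n) ℂ := SchwartzMap.fourierTransformCLM ℂ u with hWdef
  have hWcoe : ⇑W = VectorFourier.fourierIntegral Real.fourierChar volume (innerₗ (En n)) ⇑u := by rw [hWdef, SchwartzMap.fourierTransformCLM_apply]; rfl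
  -- the kernel function
  set K : En n → ℂ := fun ξ => ∫ η, g (ξ - η) η * W η with hKdef
  have Kint : Integrable K (volume : Measure (En n)) := (int_eval hg W).integral_prod_left
  have Kmem : MemLp K 2 (volume : Measure (En n)) :=
    K_mem K Kint _ (K_bound hg W)
  set Kl : Lp ℂ 2 (volume : Measure (En n)) := Kmem.toLp K with hKl
  -- `T v` agrees a.e. with the explicit integral
  have hTv : ⇑(T v) =ᵐ[volume] fun x => ∫ ξ, ch x ξ * symbol g x ξ * W ξ := by
    have h := hT u v hv
    simp only [← hWcoe] at h
    exact h
  -- main orthogonality computation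
  have main : ∀ w : SchwartzMap (En n) ℂ,
      (inner ℂ (U (T v) - Kl) (U ((schwartz_memL2 w).toLp ⇑w)) : ℂ) = 0 := by
    intro w
    set wL : Lp ℂ 2 (volume : Measure (En n)) := (schwartz_memL2 w).toLp ⇑w with hwL
    have hwLcoe : ⇑wL =ᵐ[volume] ⇑w := (schwartz_memL2 w).coeFn_toLp
    have h1 : (inner ℂ (U (T v)) (U wL) : ℂ) = ∫ x, (starRingEnd ℂ) ((T v : En n → ℂ) x) * wL x := by
      rw [LinearIsometryEquiv.inner_map_map, L2.inner_def]
      simp only [RCLike.inner_apply']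
    have h2 : (inner ℂ Kl (U wL) : ℂ) = ∫ ξ, (starRingEnd ℂ) (K ξ) * VectorFourier.fourierIntegral Real.fourierChar volume (innerₗ (En n)) ⇑w ξ := by
      rw [L2.inner_def]
      refine integral_congr_ae ?_
      filter_upwards [Kmem.coeFn_toLp, hU w wL hwLcoe] with ξ hξ hξ'
      rw [RCLike.inner_apply', hξ, hξ']
    have h3 : (∫ x, (starRingEnd ℂ) ((T v : En n → ℂ) x) * wL x) =
        ∫ x, (starRingEnd ℂ) (∫ ζ, ch x ζ * K ζ) * w x := by
      refine integral_congr_ae ?_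
      filter_upwards [hTv, hwLcoe] with x hx hx'
      rw [hx, hx', key hg W x]
    rw [inner_sub_left, h1, h2, h3, pairing K Kint w, sub_self]
  -- deduce that `U (T v) = Kl`
  have hy : ∀ w : SchwartzMap (En n) ℂ,
      (∫ x, (starRingEnd ℂ) ((U.symm (U (T v) - Kl) : En n → ℂ) x) * w x) = 0 := by
    intro w
    set y : Lp ℂ 2 (volume : Measure (En n)) := U.symm (U (T v) - Kl) with hy'
    have h1 : (inner ℂ y ((schwartz_memL2 w).toLp ⇑w) : ℂ) = 0 := by
      rw [← LinearIsometryEquiv.inner_map_map U y ((schwartz_memL2 w).toLp ⇑w), hy',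
        LinearIsometryEquiv.apply_symm_apply]
      exact main w
    rw [L2.inner_def] at h1
    rw [← h1]
    refine integral_congr_ae ?_
    filter_upwards [(schwartz_memL2 w).coeFn_toLp] with x hx
    rw [RCLike.inner_apply', hx]
  have hy0 : U.symm (U (T v) - Kl) = 0 := by
    set y : Lp ℂ 2 (volume : Measure (En n)) := U.symm (U (T v) - Kl) with hy'
    rw [Lp.eq_zero_iff_ae_eq_zero]
    have hli : LocallyIntegrable (⇑y) (volume : Measure (En n)) :=
      (Lp.memLp y).locallyIntegrable one_le_two
    refine ae_eq_zero_of_integral_contDiff_smul_eq_zero hli ?_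
    intro ψ hψ hψc
    have hψC : ContDiff ℝ ((⊤ : ℕ∞) : WithTop ℕ∞) fun x : En n => (ψ x : ℂ) :=
      Complex.ofRealCLM.contDiff.comp hψ
    have hψsupp : HasCompactSupport fun x : En n => (ψ x : ℂ) :=
      hψc.comp_left (g := fun r : ℝ => (r : ℂ)) rfl
    have h := hy (toSchwartz _ hψC hψsupp)
    have heq : (fun x => ψ x • (y x : ℂ)) = fun x =>
        (starRingEnd ℂ) ((starRingEnd ℂ) (y x) * (ψ x : ℂ)) := by
      funext x
      simp only [map_mul, Complex.conj_conj, Complex.conj_ofReal, Complex.real_smul]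
      ring
    rw [heq]
    rw [integral_conj]
    have h' : (∫ x, (starRingEnd ℂ) (y x) * (ψ x : ℂ)) = 0 := h
    rw [h', map_zero]
  have hUTv : U (T v) = Kl := by
    have := congrArg U hy0
    rw [LinearIsometryEquiv.apply_symm_apply, map_zero] at this
    exact sub_eq_zero.mp this
  rw [hUTv]
  filter_upwards [Kmem.coeFn_toLp] with ξ hξ
  rw [hξ]
  simp only [hKdef, hWcoe]
end
end

section
/- Let J be an admissible C*-subalgebra of BC_u(ℝⁿ): a norm-closed, conjugation-closed subalgebra of BC_u(ℝⁿ), invariant under all translations, containing C_0(ℝⁿ). Let ψ : ℝⁿ → ℂ be bounded and differentiable, and suppose each partial derivative ∂_jψ (j = 1,…,n) belongs to J. Then ψ is bounded and uniformly continuous, and for every ζ ∈ ℝⁿ the function ξ ↦ ψ(ξ+ζ) − ψ(ξ) belongs to J (that is, ψ ∈ J̃ := {ψ ∈ BC_u(ℝⁿ) : ∀ζ, τ_ζψ − ψ ∈ J}). -/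
open MeasureTheory Filter Complex

noncomputable section

private lemma En.abs_coord_le {n : ℕ} (v : En n) (j : Fin n) : |v j| ≤ ‖v‖ := by
  rw [EuclideanSpace.norm_eq]
  calc |v j| = Real.sqrt (‖v j‖ ^ 2) := by
        rw [Real.sqrt_sq_eq_abs]; simp
  _ ≤ _ := by
      apply Real.sqrt_le_sqrt
      exact Finset.single_le_sum (f := fun i => ‖v i‖ ^ 2) (fun i _ => by positivity)
        (Finset.mem_univ j)

private lemma En.eq_sum_single {n : ℕ} (v : En n) :
    v = ∑ j : Fin n, v j • EuclideanSpace.single j (1 : ℝ) := by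
  have := (EuclideanSpace.basisFun (Fin n) ℝ).sum_repr v
  simp only [EuclideanSpace.basisFun_apply, EuclideanSpace.basisFun_repr] at this
  exact this.symm

private lemma uc_finset_sum {ι α E : Type*} [UniformSpace α] [NormedAddCommGroup E]
    (s : Finset ι) (f : ι → α → E) (h : ∀ i ∈ s, UniformContinuous (f i)) :
    UniformContinuous (fun x => ∑ i ∈ s, f i x) := by
  classical
  induction s using Finset.induction_on with
  | empty => simpa using uniformContinuous_const
  | insert a s' hx ih =>
      simp only [Finset.sum_insert hx]
      exact (h a (Finset.mem_insert_self a s')).add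
        (ih fun i hi => h i (Finset.mem_insert_of_mem hi))

theorem mem_Jtilde_of_partial_derivatives_mem
    (n : ℕ)
    (J : Set (En n → ℂ))
    (hJsub : ∀ ψ ∈ J, BCu ψ)
    (hJclosed : IsClosed {φ : BoundedContinuousFunction (En n) ℂ | ⇑φ ∈ J})
    (hJconj : ∀ ψ ∈ J, (fun ξ => starRingEnd ℂ (ψ ξ)) ∈ J)
    (hJadd : ∀ ψ ∈ J, ∀ φ ∈ J, ψ + φ ∈ J)
    (hJsmul : ∀ (c : ℂ), ∀ ψ ∈ J, c • ψ ∈ J)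
    (hJmul : ∀ ψ ∈ J, ∀ φ ∈ J, ψ * φ ∈ J)
    (hJtrans : ∀ ψ ∈ J, ∀ η : En n, (fun ξ => ψ (ξ + η)) ∈ J)
    (hJC0 : ∀ φ : En n → ℂ, C0 φ → φ ∈ J)
    (ψ : En n → ℂ)
    (hψbdd : Bornology.IsBounded (Set.range ψ))
    (hψdiff : Differentiable ℝ ψ)
    (hψderiv : ∀ j : Fin n, (fun ξ => fderiv ℝ ψ ξ (EuclideanSpace.single j (1 : ℝ))) ∈ J) :
    BCu ψ ∧ ∀ ζ : En n, (fun ξ => ψ (ξ + ζ) - ψ ξ) ∈ J := by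
  classical
  set D : Fin n → En n → ℂ := fun j ξ => fderiv ℝ ψ ξ (EuclideanSpace.single j (1 : ℝ)) with hDdef
  have hDJ : ∀ j, D j ∈ J := hψderiv
  have hDbcu : ∀ j, BCu (D j) := fun j => hJsub _ (hDJ j)
  -- uniform bounds on the partial derivatives
  have hbd : ∀ j, ∃ Mj : ℝ, ∀ x, ‖D j x‖ ≤ Mj := by
    intro j
    obtain ⟨C, hC⟩ := isBounded_iff_forall_norm_le.mp (hDbcu j).1
    exact ⟨C, fun x => hC _ (Set.mem_range_self x)⟩
  choose M hM using hbd
  have hMnn : ∀ j, 0 ≤ M j := fun j => le_trans (norm_nonneg _) (hM j 0)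
  set C : ℝ := ∑ j : Fin n, M j with hCdef
  have hCnn : 0 ≤ C := Finset.sum_nonneg fun j _ => hMnn j
  -- expansion of the derivative in coordinates
  have hexp : ∀ (x : En n) (v : En n),
      fderiv ℝ ψ x v = ∑ j : Fin n, v j • D j x := by
    intro x v
    conv_lhs => rw [En.eq_sum_single v]
    rw [map_sum]
    exact Finset.sum_congr rfl fun j _ => (fderiv ℝ ψ x).map_smul _ _
  -- operator norm bound
  have hop : ∀ x : En n, ‖fderiv ℝ ψ x‖ ≤ C := by
    intro x
    apply ContinuousLinearMap.opNorm_le_bound _ hCnn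
    intro v
    rw [hexp]
    calc ‖∑ j : Fin n, v j • D j x‖ ≤ ∑ j : Fin n, ‖v j • D j x‖ := norm_sum_le _ _
    _ ≤ ∑ j : Fin n, M j * ‖v‖ := by
        apply Finset.sum_le_sum
        intro j _
        rw [norm_smul, Real.norm_eq_abs, mul_comm (M j) ‖v‖]
        exact mul_le_mul (En.abs_coord_le v j) (hM j x) (norm_nonneg _) (norm_nonneg _)
          |>.trans_eq (mul_comm _ _) |>.trans_eq (mul_comm _ _)
    _ = C * ‖v‖ := by rw [← Finset.sum_mul]
  -- ψ is Lipschitz, hence uniformly continuous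
  have hlip : LipschitzWith C.toNNReal ψ := by
    apply lipschitzWith_of_nnnorm_fderiv_le hψdiff
    intro x
    rw [← NNReal.coe_le_coe]
    simpa [Real.coe_toNNReal _ hCnn] using hop x
  have hψuc : UniformContinuous ψ := hlip.uniformContinuous
  have hbcu : BCu ψ := ⟨hψbdd, hψuc⟩
  refine ⟨hbcu, ?_⟩
  -- uniform continuity of the full derivative
  have hΦeq : ∀ x : En n, fderiv ℝ ψ x
      = ∑ j : Fin n, (EuclideanSpace.proj j : En n →L[ℝ] ℝ).smulRight (D j x) := by
    intro x
    ext v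
    rw [hexp]
    simp [ContinuousLinearMap.sum_apply, ContinuousLinearMap.smulRight_apply]
  have hΦuc : UniformContinuous (fun x : En n => fderiv ℝ ψ x) := by
    have : (fun x : En n => fderiv ℝ ψ x)
        = fun x => ∑ j : Fin n,
            (EuclideanSpace.proj j : En n →L[ℝ] ℝ).smulRight (D j x) := funext hΦeq
    rw [this]
    apply uc_finset_sum
    intro j _
    have hlin : LipschitzWith ‖(EuclideanSpace.proj j : En n →L[ℝ] ℝ)‖₊
        (fun z : ℂ => (EuclideanSpace.proj j : En n →L[ℝ] ℝ).smulRight z) := by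
      apply LipschitzWith.of_dist_le_mul
      intro z w
      have hsub : (EuclideanSpace.proj j : En n →L[ℝ] ℝ).smulRight z
          - (EuclideanSpace.proj j : En n →L[ℝ] ℝ).smulRight w
          = (EuclideanSpace.proj j : En n →L[ℝ] ℝ).smulRight (z - w) := by
        ext x; simp [smul_sub]
      rw [dist_eq_norm, dist_eq_norm, hsub, ContinuousLinearMap.norm_smulRight_apply,
        coe_nnnorm]
    exact hlin.uniformContinuous.comp (hDbcu j).2
  -- algebraic closure properties of J
  have hJ0 : (0 : En n → ℂ) ∈ J := hJC0 0 ⟨continuous_const, tendsto_const_nhds⟩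
  have hJsum : ∀ {ι : Type} (s : Finset ι) (f : ι → En n → ℂ),
      (∀ i ∈ s, f i ∈ J) → (fun ξ => ∑ i ∈ s, f i ξ) ∈ J := by
    intro ι s f hf
    have heq : (fun ξ => ∑ i ∈ s, f i ξ) = ∑ i ∈ s, f i := by
      funext ξ; rw [Finset.sum_apply]
    rw [heq]
    exact Finset.sum_induction f (· ∈ J) (fun a b ha hb => hJadd a ha b hb) hJ0 hf
  have hJreal : ∀ (r : ℝ) (f : En n → ℂ), f ∈ J → (fun ξ => r • f ξ) ∈ J := by
    intro r f hf
    have heq : (fun ξ => r • f ξ) = ((r : ℂ) • f) := by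
      funext ξ; simp [Pi.smul_apply, Complex.real_smul]
    rw [heq]
    exact hJsmul _ _ hf
  -- bound on ψ
  obtain ⟨B, hB⟩ := isBounded_iff_forall_norm_le.mp hψbdd
  have hBx : ∀ x, ‖ψ x‖ ≤ B := fun x => hB _ (Set.mem_range_self x)
  intro ζ
  -- the approximating Riemann-type sums
  set h : ℕ → En n := fun N => (N : ℝ)⁻¹ • ζ with hhdef
  set g : ℕ → En n → ℂ :=
    fun N ξ => ∑ k ∈ Finset.range N, fderiv ℝ ψ (ξ + (k : ℝ) • h N) (h N) with hgdef
  have hhnorm : ∀ N : ℕ, (N : ℝ) * ‖h N‖ ≤ ‖ζ‖ := by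
    intro N
    rcases Nat.eq_zero_or_pos N with h0 | hpos
    · simp [hhdef, h0]
    · have hN : (0 : ℝ) < N := by exact_mod_cast hpos
      rw [hhdef]
      simp only [norm_smul, Real.norm_eq_abs, abs_inv, Nat.abs_cast]
      rw [← mul_assoc, mul_inv_cancel₀ hN.ne', one_mul]
  have hhle : ∀ N : ℕ, ‖h N‖ ≤ (N : ℝ)⁻¹ * ‖ζ‖ := by
    intro N
    rw [hhdef]
    simp [norm_smul, abs_inv]
  -- membership of the approximants
  have hgJ : ∀ N, g N ∈ J := by
    intro N
    rw [hgdef]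
    apply hJsum
    intro k _
    have heq : (fun ξ => fderiv ℝ ψ (ξ + (k : ℝ) • h N) (h N))
        = fun ξ => ∑ j : Fin n, (h N) j • D j (ξ + (k : ℝ) • h N) := by
      funext ξ; exact hexp _ _
    rw [heq]
    apply hJsum
    intro j _
    exact hJreal _ _ (hJtrans _ (hDJ j) _)
  -- continuity facts
  have hDcont : ∀ j, Continuous (D j) := fun j => (hDbcu j).2.continuous
  have hgcont : ∀ N, Continuous (g N) := by
    intro N
    rw [hgdef]
    apply continuous_finset_sum
    intro k _
    exact (ContinuousLinearMap.apply ℝ ℂ (h N)).continuous.comp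
      (hΦuc.continuous.comp (continuous_id.add continuous_const))
  have hgbound : ∀ N ξ, ‖g N ξ‖ ≤ C * ‖ζ‖ := by
    intro N ξ
    rw [hgdef]
    calc ‖∑ k ∈ Finset.range N, fderiv ℝ ψ (ξ + (k : ℝ) • h N) (h N)‖
        ≤ ∑ k ∈ Finset.range N, ‖fderiv ℝ ψ (ξ + (k : ℝ) • h N) (h N)‖ := norm_sum_le _ _
    _ ≤ ∑ _k ∈ Finset.range N, C * ‖h N‖ := by
        apply Finset.sum_le_sum
        intro k _
        exact le_trans ((fderiv ℝ ψ _).le_opNorm _)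
          (mul_le_mul_of_nonneg_right (hop _) (norm_nonneg _))
    _ = (N : ℝ) * (C * ‖h N‖) := by
        rw [Finset.sum_const, Finset.card_range, nsmul_eq_mul]
    _ = C * ((N : ℝ) * ‖h N‖) := by ring
    _ ≤ C * ‖ζ‖ := mul_le_mul_of_nonneg_left (hhnorm N) hCnn
  -- the key uniform estimate
  have hkey : ∀ ε > (0:ℝ), ∃ N₀ : ℕ, ∀ N ≥ N₀, ∀ ξ,
      ‖ψ (ξ + ζ) - ψ ξ - g N ξ‖ ≤ ε * ‖ζ‖ := by
    intro ε hε
    obtain ⟨δ, hδpos, hδ⟩ := Metric.uniformContinuous_iff.mp hΦuc ε hε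
    obtain ⟨N₁, hN₁⟩ := exists_nat_gt (‖ζ‖ / δ)
    refine ⟨N₁ + 1, fun N hN ξ => ?_⟩
    have hNpos : 0 < N := lt_of_lt_of_le (Nat.succ_pos N₁) hN
    have hNR : (0 : ℝ) < N := by exact_mod_cast hNpos
    have hhlt : ‖h N‖ < δ := by
      refine lt_of_le_of_lt (hhle N) ?_
      rw [inv_mul_lt_iff₀ hNR]
      have h1 : ‖ζ‖ / δ < (N : ℝ) := by
        refine lt_of_lt_of_le hN₁ ?_
        exact_mod_cast le_trans (Nat.le_succ N₁) hN
      calc ‖ζ‖ = (‖ζ‖ / δ) * δ := by field_simp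
      _ < (N : ℝ) * δ := by
          exact mul_lt_mul_of_pos_right h1 hδpos
    -- telescoping
    have htel : ψ (ξ + ζ) - ψ ξ
        = ∑ k ∈ Finset.range N,
            (ψ (ξ + ((k : ℝ) + 1) • h N) - ψ (ξ + (k : ℝ) • h N)) := by
      have hts := Finset.sum_range_sub (f := fun k : ℕ => ψ (ξ + (k : ℝ) • h N)) N
      have hNh : (N : ℝ) • h N = ζ := by
        rw [hhdef, smul_smul, mul_inv_cancel₀ hNR.ne', one_smul]
      rw [hNh] at hts
      push_cast at hts
      simp only [zero_smul, add_zero] at hts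
      exact hts.symm
    -- per-term mean value estimate
    have hterm : ∀ k ∈ Finset.range N,
        ‖(ψ (ξ + ((k : ℝ) + 1) • h N) - ψ (ξ + (k : ℝ) • h N))
          - fderiv ℝ ψ (ξ + (k : ℝ) • h N) (h N)‖ ≤ ε * ‖h N‖ := by
      intro k _
      set x := ξ + (k : ℝ) • h N with hxdef
      have hy : ξ + ((k : ℝ) + 1) • h N = x + h N := by
        rw [hxdef, add_smul, one_smul, add_assoc]
      rw [hy]
      have hseg : ∀ z ∈ segment ℝ x (x + h N), ‖fderiv ℝ ψ z - fderiv ℝ ψ x‖ ≤ ε := by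
        intro z hz
        rw [segment_eq_image'] at hz
        obtain ⟨t, ⟨ht0, ht1⟩, rfl⟩ := hz
        have hdist : dist (x + t • (x + h N - x)) x < δ := by
          rw [dist_eq_norm, add_sub_cancel_left, add_sub_cancel_left, norm_smul,
            Real.norm_eq_abs, _root_.abs_of_nonneg ht0]
          calc t * ‖h N‖ ≤ 1 * ‖h N‖ :=
            mul_le_mul_of_nonneg_right ht1 (norm_nonneg _)
          _ < δ := by rw [one_mul]; exact hhlt
        have := hδ hdist
        rw [dist_eq_norm] at this
        exact le_of_lt this
      have := (convex_segment x (x + h N)).norm_image_sub_le_of_norm_fderiv_le'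
        (fun z _ => hψdiff z) hseg (left_mem_segment ℝ x (x + h N))
        (right_mem_segment ℝ x (x + h N))
      rw [add_sub_cancel_left] at this
      exact this
    calc ‖ψ (ξ + ζ) - ψ ξ - g N ξ‖
        = ‖∑ k ∈ Finset.range N,
            ((ψ (ξ + ((k : ℝ) + 1) • h N) - ψ (ξ + (k : ℝ) • h N))
              - fderiv ℝ ψ (ξ + (k : ℝ) • h N) (h N))‖ := by
          rw [htel, hgdef, ← Finset.sum_sub_distrib]
    _ ≤ ∑ k ∈ Finset.range N,
          ‖(ψ (ξ + ((k : ℝ) + 1) • h N) - ψ (ξ + (k : ℝ) • h N))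
            - fderiv ℝ ψ (ξ + (k : ℝ) • h N) (h N)‖ := norm_sum_le _ _
    _ ≤ ∑ _k ∈ Finset.range N, ε * ‖h N‖ := Finset.sum_le_sum hterm
    _ = (N : ℝ) * (ε * ‖h N‖) := by
        rw [Finset.sum_const, Finset.card_range, nsmul_eq_mul]
    _ = ε * ((N : ℝ) * ‖h N‖) := by ring
    _ ≤ ε * ‖ζ‖ := mul_le_mul_of_nonneg_left (hhnorm N) (le_of_lt hε)
  -- package into bounded continuous functions and use closedness
  have hFcont : Continuous (fun ξ => ψ (ξ + ζ) - ψ ξ) :=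
    (hψdiff.continuous.comp (continuous_id.add continuous_const)).sub hψdiff.continuous
  set FB : BoundedContinuousFunction (En n) ℂ :=
    BoundedContinuousFunction.ofNormedAddCommGroup _ hFcont (B + B)
      (fun ξ => le_trans (norm_sub_le _ _) (add_le_add (hBx _) (hBx _))) with hFBdef
  set GB : ℕ → BoundedContinuousFunction (En n) ℂ :=
    fun N => BoundedContinuousFunction.ofNormedAddCommGroup (g N) (hgcont N) (C * ‖ζ‖)
      (hgbound N) with hGBdef
  have htend : Tendsto GB atTop (nhds FB) := by
    rw [Metric.tendsto_atTop]
    intro ε hε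
    have hε' : 0 < ε / (2 * (‖ζ‖ + 1)) := by positivity
    obtain ⟨N₀, hN₀⟩ := hkey _ hε'
    refine ⟨N₀, fun N hN => ?_⟩
    have hd : dist (GB N) FB ≤ (ε / (2 * (‖ζ‖ + 1))) * ‖ζ‖ := by
      apply BoundedContinuousFunction.dist_le (by positivity) |>.mpr
      intro ξ
      rw [hGBdef, hFBdef]
      simp only [BoundedContinuousFunction.coe_ofNormedAddCommGroup]
      rw [dist_eq_norm, ← norm_neg]
      have := hN₀ N hN ξ
      convert this using 2
      · rfl
      ring_nf
    refine lt_of_le_of_lt hd ?_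
    have h1 : (0:ℝ) ≤ ‖ζ‖ := norm_nonneg _
    rw [div_mul_eq_mul_div, div_lt_iff₀ (by positivity)]
    nlinarith
  have hGBmem : ∀ N, GB N ∈ {φ : BoundedContinuousFunction (En n) ℂ | ⇑φ ∈ J} := by
    intro N
    rw [hGBdef]
    simpa [BoundedContinuousFunction.coe_ofNormedAddCommGroup] using hgJ N
  have hFBmem : FB ∈ {φ : BoundedContinuousFunction (En n) ℂ | ⇑φ ∈ J} :=
    hJclosed.mem_of_tendsto htend (Filter.Eventually.of_forall hGBmem)
  simpa [hFBdef, BoundedContinuousFunction.coe_ofNormedAddCommGroup] using hFBmem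
end
end

section
/- Let ψ : ℝⁿ → ℂ be bounded and differentiable, and suppose there is a constant C > 0 with ‖∇ψ(ξ)‖ ≤ C(1+‖ξ‖)^{−1} for all ξ ∈ ℝⁿ. Then ψ has vanishing oscillation: ψ is bounded and uniformly continuous, and for every ζ ∈ ℝⁿ the function ξ ↦ ψ(ξ+ζ) − ψ(ξ) belongs to C_0(ℝⁿ), i.e. ψ ∈ VO(ℝⁿ). -/
open MeasureTheory Filter Complex

noncomputable section

theorem vanishing_oscillation_of_gradient_decay
    (n : ℕ)
    (ψ : En n → ℂ)
    (hψbdd : Bornology.IsBounded (Set.range ψ))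
    (hψdiff : Differentiable ℝ ψ)
    (C : ℝ) (hC : 0 < C)
    (hgrad : ∀ ξ : En n, ‖fderiv ℝ ψ ξ‖ ≤ C * (1 + ‖ξ‖)⁻¹) :
    VO ψ := by
  -- global Lipschitz bound
  have hlip : LipschitzWith ⟨C, hC.le⟩ ψ := by
    apply lipschitzWith_of_nnnorm_fderiv_le hψdiff
    intro x
    refine NNReal.coe_le_coe.mp ?_
    calc ‖fderiv ℝ ψ x‖ ≤ C * (1 + ‖x‖)⁻¹ := hgrad x
      _ ≤ C * 1 := by
          gcongr
          rw [inv_le_one_iff₀]; right; linarith [norm_nonneg x]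
      _ = C := mul_one C
  refine ⟨⟨hψbdd, hlip.uniformContinuous⟩, fun ζ => ?_⟩
  have hcont : Continuous ψ := hψdiff.continuous
  refine ⟨(hcont.comp (continuous_id.add continuous_const)).sub hcont, ?_⟩
  -- key bound on the segment
  have key : ∀ ξ : En n, ‖ζ‖ ≤ ‖ξ‖ →
      ‖ψ (ξ + ζ) - ψ ξ‖ ≤ C * (1 + (‖ξ‖ - ‖ζ‖))⁻¹ * ‖ζ‖ := by
    intro ξ hξ
    have hseg : Convex ℝ (segment ℝ ξ (ξ + ζ)) := convex_segment _ _
    have hb : ∀ x ∈ segment ℝ ξ (ξ + ζ), ‖fderiv ℝ ψ x‖ ≤ C * (1 + (‖ξ‖ - ‖ζ‖))⁻¹ := by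
      intro x hx
      rcases hx with ⟨a, b, ha, hb, hab, rfl⟩
      have hxnorm : ‖ξ‖ - ‖ζ‖ ≤ ‖a • ξ + b • (ξ + ζ)‖ := by
        have : a • ξ + b • (ξ + ζ) = ξ + b • ζ := by
          rw [smul_add]
          rw [← add_assoc, ← add_smul, hab, one_smul]
        rw [this]
        have h1 : ‖ξ‖ ≤ ‖ξ + b • ζ‖ + ‖b • ζ‖ := by
          have := norm_add_le (ξ + b • ζ) (-(b • ζ))
          simpa using this
        have h2 : ‖b • ζ‖ ≤ ‖ζ‖ := by
          rw [norm_smul, Real.norm_eq_abs, _root_.abs_of_nonneg hb]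
          nlinarith [norm_nonneg ζ]
        linarith
      calc ‖fderiv ℝ ψ _‖ ≤ C * (1 + ‖a • ξ + b • (ξ + ζ)‖)⁻¹ := hgrad _
        _ ≤ C * (1 + (‖ξ‖ - ‖ζ‖))⁻¹ := by
            have hpos : 0 < 1 + (‖ξ‖ - ‖ζ‖) := by linarith [norm_nonneg ζ]
            gcongr
    have := hseg.norm_image_sub_le_of_norm_fderiv_le
      (fun x _ => hψdiff x) hb (left_mem_segment ℝ ξ (ξ + ζ)) (right_mem_segment ℝ ξ (ξ + ζ))
    simpa using this
  -- squeeze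
  have hnorm : Tendsto (fun ξ : En n => ‖ξ‖) (cocompact (En n)) atTop :=
    tendsto_norm_cocompact_atTop
  have hg : Tendsto (fun r : ℝ => C * (1 + (r - ‖ζ‖))⁻¹ * ‖ζ‖) atTop (nhds 0) := by
    have h1 : Tendsto (fun r : ℝ => 1 + (r - ‖ζ‖)) atTop atTop :=
      tendsto_atTop_add_const_left _ _ (tendsto_atTop_add_const_right _ _ tendsto_id)
    have h2 : Tendsto (fun r : ℝ => (1 + (r - ‖ζ‖))⁻¹) atTop (nhds 0) :=
      tendsto_inv_atTop_zero.comp h1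
    have := (h2.const_mul C).mul_const ‖ζ‖
    simpa using this
  apply squeeze_zero_norm' _ (hg.comp hnorm)
  filter_upwards [hnorm.eventually_ge_atTop ‖ζ‖] with ξ hξ
  exact key ξ hξ
end
end
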